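/- For each i, the operators Eᵢ = (√q+√q⁻¹)^{−1/2} ∂ᵢᴸ eᵢ, Fᵢ = (√q+√q⁻¹)^{−1/2} xᵢᴸ eᵢ, Kᵢ = √q⁻¹ γᵢ⁻¹ satisfy the osp-type relations Kᵢ Eᵢ Kᵢ⁻¹ = q Eᵢ, Kᵢ Fᵢ Kᵢ⁻¹ = q⁻¹ Fᵢ, and EᵢFᵢ + FᵢEᵢ = (Kᵢ − Kᵢ⁻¹)/(q − q⁻¹). -/

import Mathlib

noncomputable section

/-- Multi-indices for `n` q-commuting variables. -/
abbrev QIdx (n : ℕ) := Fin n →₀ ℕ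

/-- A polynomial in the q-commutative algebra `A = ℂ⟨x₁,…,xₙ⟩/(xᵢxⱼ - q xⱼxᵢ, i<j)`,
represented by its coefficient function with respect to the ordered monomial basis
`x^α = x₁^{α₁}⋯xₙ^{αₙ}`. -/
abbrev QPoly (n : ℕ) := QIdx n → ℂ

/-- The symmetric q-number `[m]_q = (q^m - q^{-m})/(q - q⁻¹)` (as a complex scalar). -/
def qNum (q : ℝ) (m : ℤ) : ℂ := ((q : ℂ) ^ m - (q : ℂ) ^ (-m)) / ((q : ℂ) - (q : ℂ)⁻¹)

/-- `∑_{j<i} αⱼ`. -/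
def lowSum {n : ℕ} (i : Fin n) (α : QIdx n) : ℤ := ∑ j, if j < i then (α j : ℤ) else 0

/-- `∑_{j>i} αⱼ`. -/
def highSum {n : ℕ} (i : Fin n) (α : QIdx n) : ℤ := ∑ j, if i < j then (α j : ℤ) else 0

/-- `∑_j αⱼ`, the total degree. -/
def totSum {n : ℕ} (α : QIdx n) : ℤ := ∑ j, (α j : ℤ)

/-- The dilation operator `γᵢ : xᵢ ↦ q·xᵢ`; on monomials `γᵢ x^α = q^{αᵢ} x^α`. -/
def gam {n : ℕ} (q : ℝ) (i : Fin n) (f : QPoly n) : QPoly n :=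
  fun α => (q : ℂ) ^ (α i : ℤ) * f α

/-- The inverse dilation `γᵢ⁻¹`. -/
def gamInv {n : ℕ} (q : ℝ) (i : Fin n) (f : QPoly n) : QPoly n :=
  fun α => (q : ℂ) ^ (-(α i : ℤ)) * f α

/-- The total dilation `γ = γ₁⋯γₙ`. -/
def gamAll {n : ℕ} (q : ℝ) (f : QPoly n) : QPoly n :=
  fun α => (q : ℂ) ^ totSum α * f α

/-- The inverse total dilation `γ⁻¹`. -/
def gamAllInv {n : ℕ} (q : ℝ) (f : QPoly n) : QPoly n :=
  fun α => (q : ℂ) ^ (-totSum α) * f α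

/-- `ωᵢ = γ₁⁻¹⋯γ_{i-1}⁻¹ γ_{i+1}⋯γₙ`; on monomials it multiplies by
`q^{∑_{j>i} αⱼ - ∑_{j<i} αⱼ}`. -/
def omegaOp {n : ℕ} (q : ℝ) (i : Fin n) (f : QPoly n) : QPoly n :=
  fun α => (q : ℂ) ^ (highSum i α - lowSum i α) * f α

/-- `ωᵢ⁻¹ = γ₁⋯γ_{i-1} γ_{i+1}⁻¹⋯γₙ⁻¹`. -/
def omegaInvOp {n : ℕ} (q : ℝ) (i : Fin n) (f : QPoly n) : QPoly n :=
  fun α => (q : ℂ) ^ (lowSum i α - highSum i α) * f α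

/-- Left multiplication by `xᵢ`:  `xᵢ · x^β = q^{-∑_{j<i} βⱼ} x^{β+δᵢ}` in `A`. -/
def xL {n : ℕ} (q : ℝ) (i : Fin n) (f : QPoly n) : QPoly n :=
  fun α => if α i = 0 then 0 else
    (q : ℂ) ^ (-(lowSum i α)) * f (α - Finsupp.single i 1)

/-- Right multiplication by `xᵢ`:  `x^β · xᵢ = q^{-∑_{j>i} βⱼ} x^{β+δᵢ}` in `A`. -/
def xR {n : ℕ} (q : ℝ) (i : Fin n) (f : QPoly n) : QPoly n :=
  fun α => if α i = 0 then 0 else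
    (q : ℂ) ^ (-(highSum i α)) * f (α - Finsupp.single i 1)

/-- The left partial q-difference operator `∂ᵢᴸ = (xᵢᴸ)⁻¹(γᵢ - γᵢ⁻¹)/(q - q⁻¹)`;
on monomials `∂ᵢᴸ x^α = [αᵢ]_q q^{∑_{j<i} αⱼ} x^{α-δᵢ}`. -/
def dL {n : ℕ} (q : ℝ) (i : Fin n) (f : QPoly n) : QPoly n :=
  fun α => qNum q (α i + 1) * (q : ℂ) ^ lowSum i α * f (α + Finsupp.single i 1)

/-- The right partial q-difference operator `∂ᵢᴿ = (xᵢᴿ)⁻¹(γᵢ - γᵢ⁻¹)/(q - q⁻¹)`;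
on monomials `∂ᵢᴿ x^α = [αᵢ]_q q^{∑_{j>i} αⱼ} x^{α-δᵢ}`. -/
def dR {n : ℕ} (q : ℝ) (i : Fin n) (f : QPoly n) : QPoly n :=
  fun α => qNum q (α i + 1) * (q : ℂ) ^ highSum i α * f (α + Finsupp.single i 1)

/-- The q-power picked up when reordering `x^α · x^β = q^(qExp α β) x^{α+β}`,
namely `qExp α β = -∑_{i>j} αᵢ βⱼ`. -/
def qExp {n : ℕ} (α β : QIdx n) : ℤ :=
  -∑ i, ∑ j, if j < i then (α i : ℤ) * (β j : ℤ) else 0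

/-- Multiplication in the q-commutative algebra `A`, in coefficient form. -/
def qMul {n : ℕ} (q : ℝ) (f g : QPoly n) : QPoly n :=
  fun α => ∑ p ∈ Finset.HasAntidiagonal.antidiagonal α, (q : ℂ) ^ qExp p.1 p.2 * f p.1 * g p.2

/-- The unit of `A`. -/
def qOne {n : ℕ} : QPoly n := fun α => if α = 0 then 1 else 0

/-- Powers in `A`. -/
def qPow {n : ℕ} (q : ℝ) (f : QPoly n) : ℕ → QPoly n
  | 0 => qOne
  | m + 1 => qMul q f (qPow q f m)

/-- The monomial `x^α` as an element of `A`. -/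
def mono {n : ℕ} (α : QIdx n) : QPoly n := fun β => if β = α then 1 else 0

/-- The variable `xᵢ` as an element of `A`. -/
def Xvar {n : ℕ} (i : Fin n) : QPoly n := mono (Finsupp.single i 1)

/-- The Q-radius `Q = x₁² + q⁻¹ x₂² + … + q^{-n+1} xₙ²` as an element of `A`. -/
def Qradius {n : ℕ} (q : ℝ) : QPoly n :=
  ∑ i : Fin n, (q : ℂ) ^ (-((i : ℕ) : ℤ)) • qMul q (Xvar i) (Xvar i)

/-- The operator `Q̂ᴸ = ∑ᵢ q^{-i+1}(xᵢᴸ)²` of left multiplication by the Q-radius. -/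
def QhatL {n : ℕ} (q : ℝ) (f : QPoly n) : QPoly n :=
  ∑ i : Fin n, (q : ℂ) ^ (-((i : ℕ) : ℤ)) • xL q i (xL q i f)

/-- The `U_q(o)`-invariant q-Laplacian `Δ_qᴿ = ∑ᵢ q^{n-i}(∂ᵢᴿ)²`. -/
def qLap {n : ℕ} (q : ℝ) (f : QPoly n) : QPoly n :=
  ∑ i : Fin n, (q : ℂ) ^ ((n : ℤ) - 1 - ((i : ℕ) : ℤ)) • dR q i (dR q i f)


/-- `√q` as a complex scalar. -/
def sqC (q : ℝ) : ℂ := Complex.ofReal (Real.sqrt q)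

/-- The right partial q-difference operator on Clifford-algebra-valued polynomials. -/
def dRC {n : ℕ} {C : Type*} [Ring C] [Algebra ℂ C] (q : ℝ) (i : Fin n)
    (f : QIdx n → C) : QIdx n → C :=
  fun α => (qNum q (α i + 1) * (q : ℂ) ^ highSum i α) • f (α + Finsupp.single i 1)

/-- The left partial q-difference operator on Clifford-algebra-valued polynomials. -/
def dLC {n : ℕ} {C : Type*} [Ring C] [Algebra ℂ C] (q : ℝ) (i : Fin n)
    (f : QIdx n → C) : QIdx n → C :=
  fun α => (qNum q (α i + 1) * (q : ℂ) ^ lowSum i α) • f (α + Finsupp.single i 1)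

/-- Left multiplication by `xᵢ` on Clifford-algebra-valued polynomials. -/
def xLC {n : ℕ} {C : Type*} [Ring C] [Algebra ℂ C] (q : ℝ) (i : Fin n)
    (f : QIdx n → C) : QIdx n → C :=
  fun α => if α i = 0 then 0 else
    (q : ℂ) ^ (-(lowSum i α)) • f (α - Finsupp.single i 1)

/-- The dilation `γᵢ` on Clifford-algebra-valued polynomials. -/
def gamC {n : ℕ} {C : Type*} [Ring C] [Algebra ℂ C] (q : ℝ) (i : Fin n)
    (f : QIdx n → C) : QIdx n → C :=
  fun α => (q : ℂ) ^ (α i : ℤ) • f α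

/-- The inverse dilation `γᵢ⁻¹` on Clifford-algebra-valued polynomials. -/
def gamInvC {n : ℕ} {C : Type*} [Ring C] [Algebra ℂ C] (q : ℝ) (i : Fin n)
    (f : QIdx n → C) : QIdx n → C :=
  fun α => (q : ℂ) ^ (-(α i : ℤ)) • f α

/-- q-commutative multiplication of Clifford-algebra-valued polynomials (the
variables q-commute among themselves and commute with the Clifford generators). -/
def qMulC {n : ℕ} {C : Type*} [Ring C] [Algebra ℂ C] (q : ℝ)
    (f g : QIdx n → C) : QIdx n → C :=
  fun α => ∑ p ∈ Finset.HasAntidiagonal.antidiagonal α, (q : ℂ) ^ qExp p.1 p.2 • (f p.1 * g p.2)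

/-- The variable `xᵢ` as a Clifford-algebra-valued polynomial. -/
def XvarC {n : ℕ} (C : Type*) [Ring C] [Algebra ℂ C] (i : Fin n) : QIdx n → C :=
  fun α => if α = Finsupp.single i 1 then 1 else 0

/-- `Eᵢ = (√q + √q⁻¹)^{-1/2} ∂ᵢᴸ eᵢ`. -/
def Eosp {n : ℕ} {C : Type*} [Ring C] [Algebra ℂ C] (q : ℝ) (e : Fin n → C) (i : Fin n)
    (f : QIdx n → C) : QIdx n → C :=
  (Complex.ofReal (Real.sqrt (Real.sqrt q + (Real.sqrt q)⁻¹)))⁻¹ •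
    dLC q i (fun α => f α * e i)

/-- `Fᵢ = (√q + √q⁻¹)^{-1/2} xᵢᴸ eᵢ`. -/
def Fosp {n : ℕ} {C : Type*} [Ring C] [Algebra ℂ C] (q : ℝ) (e : Fin n → C) (i : Fin n)
    (f : QIdx n → C) : QIdx n → C :=
  (Complex.ofReal (Real.sqrt (Real.sqrt q + (Real.sqrt q)⁻¹)))⁻¹ •
    xLC q i (fun α => f α * e i)

/-- `Kᵢ = √q⁻¹ γᵢ⁻¹`. -/
def Kosp {n : ℕ} {C : Type*} [Ring C] [Algebra ℂ C] (q : ℝ) (i : Fin n)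
    (f : QIdx n → C) : QIdx n → C :=
  (sqC q)⁻¹ • gamInvC q i f

/-- `Kᵢ⁻¹ = √q γᵢ`. -/
def KospInv {n : ℕ} {C : Type*} [Ring C] [Algebra ℂ C] (q : ℝ) (i : Fin n)
    (f : QIdx n → C) : QIdx n → C :=
  sqC q • gamC q i f


lemma lowSum_add_single {n : ℕ} (i : Fin n) (α : QIdx n) :
    lowSum i (α + Finsupp.single i 1) = lowSum i α := by
  unfold lowSum
  refine Finset.sum_congr rfl fun j _ => ?_
  by_cases h : j < i
  · simp [h, Finsupp.add_apply, Finsupp.single_apply, h.ne']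
  · simp [h]

lemma lowSum_sub_single {n : ℕ} (i : Fin n) (α : QIdx n) :
    lowSum i (α - Finsupp.single i 1) = lowSum i α := by
  unfold lowSum
  refine Finset.sum_congr rfl fun j _ => ?_
  by_cases h : j < i
  · simp [h, Finsupp.tsub_apply, Finsupp.single_apply, h.ne']
  · simp [h]

lemma sub_add_single {n : ℕ} (i : Fin n) (α : QIdx n) (h : α i ≠ 0) :
    α - Finsupp.single i 1 + Finsupp.single i 1 = α := by
  ext j
  simp only [Finsupp.add_apply, Finsupp.tsub_apply, Finsupp.single_apply]
  by_cases hij : i = j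
  · subst hij; simp; omega
  · simp [hij]

lemma add_sub_single {n : ℕ} (i : Fin n) (α : QIdx n) :
    α + Finsupp.single i 1 - Finsupp.single i 1 = α := by
  ext j
  simp only [Finsupp.add_apply, Finsupp.tsub_apply, Finsupp.single_apply]
  by_cases hij : i = j
  · subst hij; simp
  · simp [hij]

set_option maxHeartbeats 1000000 in
/-- the operators `Eᵢ, Fᵢ, Kᵢ` satisfy the osp-type relations
`KᵢEᵢKᵢ⁻¹ = qEᵢ`, `KᵢFᵢKᵢ⁻¹ = q⁻¹Fᵢ`, `EᵢFᵢ + FᵢEᵢ = (Kᵢ − Kᵢ⁻¹)/(q − q⁻¹)`. -/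
theorem osp_relations (n : ℕ) (q : ℝ) (hq : 0 < q) (hq1 : q ≠ 1)
    (C : Type*) [Ring C] [Algebra ℂ C] (e : Fin n → C)
    (he1 : ∀ j, e j ^ 2 = -1) (i : Fin n) :
    (∀ f : QIdx n → C, Kosp q i (Eosp q e i (KospInv q i f)) = (q : ℂ) • Eosp q e i f) ∧
    (∀ f : QIdx n → C, Kosp q i (Fosp q e i (KospInv q i f)) = (q : ℂ)⁻¹ • Fosp q e i f) ∧
    (∀ f : QIdx n → C,
      Eosp q e i (Fosp q e i f) + Fosp q e i (Eosp q e i f)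
        = ((q : ℂ) - (q : ℂ)⁻¹)⁻¹ • (Kosp q i f - KospInv q i f)) := by
  have hq0 : (q : ℂ) ≠ 0 := by
    simp only [ne_eq, Complex.ofReal_eq_zero]
    exact hq.ne'
  have hsr : 0 < Real.sqrt q := Real.sqrt_pos.mpr hq
  have hs : sqC q ≠ 0 := by
    simp only [sqC, ne_eq, Complex.ofReal_eq_zero]
    exact hsr.ne'
  have hs2 : sqC q * sqC q = (q : ℂ) := by
    rw [sqC, ← Complex.ofReal_mul, Real.mul_self_sqrt hq.le]
  have hc : (Complex.ofReal (Real.sqrt (Real.sqrt q + (Real.sqrt q)⁻¹))) ≠ 0 := by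
    simp only [ne_eq, Complex.ofReal_eq_zero]
    have : (0:ℝ) < Real.sqrt q + (Real.sqrt q)⁻¹ := add_pos hsr (inv_pos.mpr hsr)
    exact (Real.sqrt_pos.mpr this).ne'
  have hc2 : (Complex.ofReal (Real.sqrt (Real.sqrt q + (Real.sqrt q)⁻¹))) *
      (Complex.ofReal (Real.sqrt (Real.sqrt q + (Real.sqrt q)⁻¹))) = sqC q + (sqC q)⁻¹ := by
    rw [← Complex.ofReal_mul, Real.mul_self_sqrt (by positivity)]
    rw [sqC, Complex.ofReal_add, Complex.ofReal_inv]
  have hd : (q : ℂ) - (q : ℂ)⁻¹ ≠ 0 := by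
    intro h
    have h1 : (q : ℂ) * q = 1 := by
      have h2 := sub_eq_zero.mp h
      field_simp at h2
      linear_combination h2
    have h3 : q * q = 1 := by exact_mod_cast h1
    have h4 : (q - 1) * (q + 1) = 0 := by linear_combination h3
    rcases mul_eq_zero.mp h4 with h5 | h5
    · exact hq1 (by linarith)
    · linarith
  have hqq : (q:ℂ) * q - 1 ≠ 0 := by
    intro h
    apply hd
    have : (q:ℂ) * q = 1 := by linear_combination h
    field_simp
    linear_combination this
  set s : ℂ := sqC q with hsdef
  set c : ℂ := Complex.ofReal (Real.sqrt (Real.sqrt q + (Real.sqrt q)⁻¹)) with hcdef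
  refine ⟨?_, ?_, ?_⟩
  · intro f
    funext α
    simp only [Kosp, KospInv, Eosp, dLC, gamInvC, gamC, Pi.smul_apply, smul_mul_assoc,
      smul_smul, Finsupp.add_apply, Finsupp.single_eq_same, lowSum_add_single,
      Nat.cast_add, Nat.cast_one, ← hsdef, ← hcdef]
    congr 1
    have hp : (q:ℂ) ^ (α i : ℤ) ≠ 0 := zpow_ne_zero _ hq0
    have hl : (q:ℂ) ^ (lowSum i α) ≠ 0 := zpow_ne_zero _ hq0
    rw [zpow_add_one₀ hq0, zpow_neg]
    field_simp
  · intro f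
    funext α
    by_cases h0 : α i = 0
    · simp only [Kosp, KospInv, Fosp, xLC, gamInvC, gamC, Pi.smul_apply, smul_mul_assoc,
        smul_smul, h0, if_true, smul_zero, mul_zero, ← hsdef, ← hcdef]
    · simp only [Kosp, KospInv, Fosp, xLC, gamInvC, gamC, Pi.smul_apply, smul_mul_assoc,
        smul_smul, h0, if_false, Finsupp.tsub_apply, Finsupp.single_eq_same,
        lowSum_sub_single, ← hsdef, ← hcdef]
      congr 1
      have hp : (q:ℂ) ^ (α i : ℤ) ≠ 0 := zpow_ne_zero _ hq0
      have hl : (q:ℂ) ^ (lowSum i α) ≠ 0 := zpow_ne_zero _ hq0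
      rw [Nat.cast_sub (Nat.one_le_iff_ne_zero.mpr h0), Nat.cast_one, zpow_sub₀ hq0, zpow_one,
        zpow_neg, zpow_neg]
      field_simp
  · intro f
    funext α
    have he : e i * e i = -1 := by rw [← sq]; exact he1 i
    simp only [Eosp, Fosp, Kosp, KospInv, dLC, xLC, gamC, gamInvC, Pi.add_apply,
      Pi.smul_apply, Pi.sub_apply, smul_mul_assoc, smul_smul, lowSum_add_single,
      lowSum_sub_single, Finsupp.add_apply, Finsupp.single_eq_same, add_sub_single,
      Nat.succ_ne_zero, if_false, Nat.cast_add, Nat.cast_one, ← hsdef, ← hcdef]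
    by_cases h0 : α i = 0
    · simp only [h0, if_true, smul_zero, add_zero, Nat.cast_zero, zero_add, neg_zero,
        zpow_zero, mul_one, one_mul]
      rw [mul_assoc (f α), he, mul_neg_one, smul_neg, ← neg_smul]
      rw [smul_sub, smul_smul, smul_smul, ← sub_smul]
      congr 1
      have hu : (q:ℂ) ^ (lowSum i α) ≠ 0 := zpow_ne_zero _ hq0
      simp only [qNum, zpow_one, zpow_neg]
      field_simp
      have hc2s : c * c * s = s * s + 1 := by
        rw [hc2, add_mul, inv_mul_cancel₀ hs]
      generalize (q:ℂ) ^ lowSum i α = X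
      rw [← hs2]
      have h4 : (s * s) ^ 2 - 1 ≠ 0 := by rw [sq, hs2]; exact hqq
      rw [neg_div', div_eq_div_iff h4 h4]
      linear_combination ((s ^ 4 - 1) * (s ^ 2 - 1) * s) * hc2s
    · simp only [h0, if_false, Finsupp.tsub_apply, Finsupp.single_eq_same,
        sub_add_single i α h0, smul_smul]
      have hcast : ((α i - 1 : ℕ) : ℤ) + 1 = (α i : ℤ) := by omega
      rw [hcast]
      rw [mul_assoc (f α), he, mul_neg_one, smul_neg, smul_neg, ← neg_smul, ← neg_smul,
        ← add_smul]
      rw [smul_sub, smul_smul, smul_smul, ← sub_smul]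
      congr 1
      have hu : (q:ℂ) ^ (lowSum i α) ≠ 0 := zpow_ne_zero _ hq0
      have ht : (q:ℂ) ^ ((α i : ℕ) : ℤ) ≠ 0 := zpow_ne_zero _ hq0
      have hz1 : (q:ℂ) ^ ((α i : ℤ) + 1) = (q:ℂ) ^ (α i : ℤ) * q := zpow_add_one₀ hq0 _
      simp only [qNum, zpow_neg]
      rw [hz1]
      generalize hX : (q:ℂ) ^ (lowSum i α) = X at hu ⊢
      generalize hT : (q:ℂ) ^ ((α i : ℕ) : ℤ) = T at ht ⊢
      clear hX hT hz1 hcast hsdef hcdef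
      clear_value s c
      rw [← hs2] at hd hqq ⊢
      have hc2s : c * c * s = s * s + 1 := by
        rw [hc2, add_mul, inv_mul_cancel₀ hs]
      have hss1 : s * s + 1 ≠ 0 := hc2s ▸ mul_ne_zero (mul_ne_zero hc hc) hs
      have hcinv2 : c⁻¹ ^ 2 = s / (s * s + 1) := by
        rw [inv_pow, sq, eq_div_iff hss1, ← hc2s, ← mul_assoc,
          inv_mul_cancel₀ (mul_ne_zero hc hc), one_mul]
      have hswap : ∀ A B : ℂ, c⁻¹ * (A * (c⁻¹ * B)) = (A * B) * c⁻¹ ^ 2 :=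
        fun A B => by ring
      rw [hswap, hswap, hcinv2]
      have hbig : -(T * s ^ 2 * X) - T * s ^ 4 * X + T * s ^ 6 * X + T * s ^ 8 * X ≠ 0 := by
        have hfac : -(T * s ^ 2 * X) - T * s ^ 4 * X + T * s ^ 6 * X + T * s ^ 8 * X
            = T * X * s ^ 2 * ((s * s * (s * s) - 1) * (s * s + 1)) := by ring
        rw [hfac]
        exact mul_ne_zero (mul_ne_zero (mul_ne_zero ht hu) (pow_ne_zero _ hs))
          (mul_ne_zero hqq hss1)
      field_simp
      have h4 : s ^ 4 - 1 ≠ 0 := by rw [show s ^ 4 = s * s * (s * s) by ring]; exact hqq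
      have h2 : s ^ 2 + 1 ≠ 0 := by rw [sq]; exact hss1
      rw [div_eq_div_iff (mul_ne_zero h4 h2) h4]
      ring
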